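/- Let [n] denote the n-element reflexive chain. For all n, m, k ≥ 1 and all surjective p-morphisms f : [n] → [k] and g : [m] → [k], there exist t ≥ 1 and surjective p-morphisms p : [t] → [n] and q : [t] → [m] such that f ∘ p = g ∘ q. -/
import Mathlib


/-- A p-morphism between Kripke frames `(W, rW)` and `(V, rV)`:
a function that is stable and open. -/
def IsPMorphism {W V : Type*} (rW : W → W → Prop) (rV : V → V → Prop) (f : W → V) : Prop :=
  (∀ ⦃w w'⦄, rW w w' → rV (f w) (f w')) ∧
  (∀ w v', rV (f w) v' → ∃ w', rW w w' ∧ f w' = v')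

/-- The `n`-element reflexive chain `[n]`, realized as `Fin n` with `i ≺ j ↔ i ≤ j`. -/
def chainRel (n : ℕ) : Fin n → Fin n → Prop := (· ≤ ·)

/-- A monotone surjection between reflexive chains is a p-morphism. -/
lemma mono_surj_pmorphism {a b : ℕ} (f : Fin a → Fin b) (hmono : Monotone f)
    (hsurj : Function.Surjective f) : IsPMorphism (chainRel a) (chainRel b) f := by
  refine ⟨fun w w' h => hmono h, ?_⟩
  intro w v' hle
  obtain ⟨u, hu⟩ := hsurj v'
  rcases le_or_gt w u with h1 | h1
  · exact ⟨u, h1, hu⟩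
  · have : v' ≤ f w := hu ▸ hmono h1.le
    exact ⟨w, le_refl w, le_antisymm (le_antisymm hle this ▸ le_refl _) this⟩

section Staircase

variable {n m k : ℕ} (f : Fin n → Fin k) (g : Fin m → Fin k)

/-- The "staircase" predicate on pairs: the pair lies in the fiber product and
either its second coordinate is minimal in its `g`-fiber or its first coordinate
is maximal in its `f`-fiber. -/
def Good (x : Fin n × Fin m) : Prop :=
  f x.1 = g x.2 ∧ ((∀ j', g j' = g x.2 → x.2 ≤ j') ∨ (∀ i', f i' = f x.1 → i' ≤ x.1))

lemma good_comparable_aux (hmf : Monotone f) (hmg : Monotone g)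
    {x y : Fin n × Fin m} (hx : Good f g x) (hy : Good f g y) (h1 : x.1 ≤ y.1) :
    (x.1 ≤ y.1 ∧ x.2 ≤ y.2) ∨ (y.1 ≤ x.1 ∧ y.2 ≤ x.2) := by
  obtain ⟨hxe, hxc⟩ := hx
  obtain ⟨hye, hyc⟩ := hy
  have hgg : g x.2 ≤ g y.2 := by rw [← hxe, ← hye]; exact hmf h1
  rcases lt_or_eq_of_le hgg with hlt | heq
  · left
    refine ⟨h1, ?_⟩
    by_contra hc
    push_neg at hc
    exact absurd (hmg hc.le) (not_le_of_gt hlt)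
  · rcases hxc with hxmin | hxmax
    · exact Or.inl ⟨h1, hxmin y.2 heq.symm⟩
    · have hif : f y.1 = f x.1 := by rw [hxe, hye, heq]
      have h2 : y.1 ≤ x.1 := hxmax y.1 hif
      rcases le_total x.2 y.2 with h | h
      · exact Or.inl ⟨h1, h⟩
      · exact Or.inr ⟨h2, h⟩

lemma good_comparable (hmf : Monotone f) (hmg : Monotone g)
    {x y : Fin n × Fin m} (hx : Good f g x) (hy : Good f g y) :
    (x.1 ≤ y.1 ∧ x.2 ≤ y.2) ∨ (y.1 ≤ x.1 ∧ y.2 ≤ x.2) := by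
  rcases le_total x.1 y.1 with h | h
  · exact good_comparable_aux f g hmf hmg hx hy h
  · exact (good_comparable_aux f g hmf hmg hy hx h).symm

lemma good_le_of_sum_le (hmf : Monotone f) (hmg : Monotone g)
    {x y : Fin n × Fin m} (hx : Good f g x) (hy : Good f g y)
    (h : (x.1 : ℕ) + (x.2 : ℕ) ≤ (y.1 : ℕ) + (y.2 : ℕ)) :
    x.1 ≤ y.1 ∧ x.2 ≤ y.2 := by
  rcases good_comparable f g hmf hmg hx hy with ⟨h1, h2⟩ | ⟨h1, h2⟩
  · exact ⟨h1, h2⟩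
  · have h1' := (Fin.le_def).mp h1
    have h2' := (Fin.le_def).mp h2
    exact ⟨Fin.le_def.mpr (by omega), Fin.le_def.mpr (by omega)⟩

/-- The staircase as a type of its own (a fresh structure so that no ambient
order instances interfere). -/
structure Stair (hmf : Monotone f) (hmg : Monotone g) where
  pr : Fin n × Fin m
  good : Good f g pr

variable {hmf : Monotone f} {hmg : Monotone g}

lemma Stair.pr_injective : Function.Injective (Stair.pr (f := f) (g := g) (hmf := hmf) (hmg := hmg)) := by
  intro a b h
  cases a; cases b; simpa using h

/-- The sum embedding of the staircase into ℕ. -/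
def Stair.emb (x : Stair f g hmf hmg) : ℕ := (x.pr.1 : ℕ) + (x.pr.2 : ℕ)

lemma Stair.emb_injective :
    Function.Injective (Stair.emb (f := f) (g := g) (hmf := hmf) (hmg := hmg)) := by
  intro x y h
  have h1 := good_le_of_sum_le f g hmf hmg x.good y.good (le_of_eq h)
  have h2 := good_le_of_sum_le f g hmf hmg y.good x.good (le_of_eq h.symm)
  apply Stair.pr_injective f g
  exact Prod.ext (le_antisymm h1.1 h2.1) (le_antisymm h1.2 h2.2)

noncomputable instance : LinearOrder (Stair f g hmf hmg) :=
  LinearOrder.lift' (Stair.emb f g) (Stair.emb_injective f g)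

lemma Stair.le_iff {x y : Stair f g hmf hmg} : x ≤ y ↔ x.emb ≤ y.emb := Iff.rfl

noncomputable instance : Fintype (Stair f g hmf hmg) :=
  Fintype.ofInjective Stair.pr (Stair.pr_injective f g)

end Staircase

/-- For all `n, m, k ≥ 1` and all surjective p-morphisms
`f : [n] → [k]` and `g : [m] → [k]` between reflexive chains, there exist `t ≥ 1` and
surjective p-morphisms `p : [t] → [n]`, `q : [t] → [m]` with `f ∘ p = g ∘ q`. -/
theorem statement9 (n m k : ℕ) (hn : 1 ≤ n) (hm : 1 ≤ m) (hk : 1 ≤ k)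
    (f : Fin n → Fin k) (g : Fin m → Fin k)
    (hf : IsPMorphism (chainRel n) (chainRel k) f) (hfs : Function.Surjective f)
    (hg : IsPMorphism (chainRel m) (chainRel k) g) (hgs : Function.Surjective g) :
    ∃ (t : ℕ), 1 ≤ t ∧
      ∃ (p : Fin t → Fin n) (q : Fin t → Fin m),
        IsPMorphism (chainRel t) (chainRel n) p ∧ Function.Surjective p ∧
        IsPMorphism (chainRel t) (chainRel m) q ∧ Function.Surjective q ∧
        f ∘ p = g ∘ q := by
  classical
  have hmf : Monotone f := fun a b h => hf.1 h
  have hmg : Monotone g := fun a b h => hg.1 h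
  -- elements witnessing surjectivity of the first projection
  have mkL : ∀ i : Fin n, ∃ x : Stair f g hmf hmg, x.pr.1 = i := by
    intro i
    have hne : (Finset.univ.filter (fun j => g j = f i)).Nonempty := by
      obtain ⟨j, hj⟩ := hgs (f i)
      exact ⟨j, by simp [hj]⟩
    set j0 := (Finset.univ.filter (fun j => g j = f i)).min' hne with hj0
    have hj0mem := (Finset.univ.filter (fun j => g j = f i)).min'_mem hne
    simp only [Finset.mem_filter] at hj0mem
    have hgj0 : g j0 = f i := hj0mem.2
    refine ⟨⟨(i, j0), ⟨hgj0.symm, Or.inl ?_⟩⟩, rfl⟩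
    intro j' hj'
    apply Finset.min'_le
    simp only [Finset.mem_filter]
    exact ⟨Finset.mem_univ _, by rw [hj', hgj0]⟩
  have mkR : ∀ j : Fin m, ∃ x : Stair f g hmf hmg, x.pr.2 = j := by
    intro j
    have hne : (Finset.univ.filter (fun i => f i = g j)).Nonempty := by
      obtain ⟨i, hi⟩ := hfs (g j)
      exact ⟨i, by simp [hi]⟩
    set i0 := (Finset.univ.filter (fun i => f i = g j)).max' hne with hi0
    have hi0mem := (Finset.univ.filter (fun i => f i = g j)).max'_mem hne
    simp only [Finset.mem_filter] at hi0mem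
    have hfi0 : f i0 = g j := hi0mem.2
    refine ⟨⟨(i0, j), ⟨hfi0, Or.inr ?_⟩⟩, rfl⟩
    intro i' hi'
    apply Finset.le_max'
    simp only [Finset.mem_filter]
    exact ⟨Finset.mem_univ _, by rw [hi', hfi0]⟩
  haveI : Nonempty (Stair f g hmf hmg) := ⟨(mkL ⟨0, hn⟩).choose⟩
  refine ⟨Fintype.card (Stair f g hmf hmg), Fintype.card_pos, ?_⟩
  set e := monoEquivOfFin (Stair f g hmf hmg) rfl with he
  set p : Fin (Fintype.card (Stair f g hmf hmg)) → Fin n := fun s => (e s).pr.1 with hp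
  set q : Fin (Fintype.card (Stair f g hmf hmg)) → Fin m := fun s => (e s).pr.2 with hq
  have hpmono : Monotone p := by
    intro s s' hss
    have h2 : (e s).emb ≤ (e s').emb := (Stair.le_iff f g).mp (e.monotone hss)
    exact (good_le_of_sum_le f g hmf hmg (e s).good (e s').good h2).1
  have hqmono : Monotone q := by
    intro s s' hss
    have h2 : (e s).emb ≤ (e s').emb := (Stair.le_iff f g).mp (e.monotone hss)
    exact (good_le_of_sum_le f g hmf hmg (e s).good (e s').good h2).2
  have hpsurj : Function.Surjective p := by
    intro i
    obtain ⟨x, hx⟩ := mkL i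
    exact ⟨e.symm x, by simp [hp, hx]⟩
  have hqsurj : Function.Surjective q := by
    intro j
    obtain ⟨x, hx⟩ := mkR j
    exact ⟨e.symm x, by simp [hq, hx]⟩
  exact ⟨p, q, mono_surj_pmorphism p hpmono hpsurj, hpsurj,
    mono_surj_pmorphism q hqmono hqsurj, hqsurj,
    funext fun s => (e s).good.1⟩
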